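/- Let ρ : ℝ² → ℝ be a C³ function with ρ(x) > 0 for all x ∈ ℝ². Then for all x ∈ ℝ² and each j ∈ {1,2}: Σ_{k=1,2} ∂_k((∂_kρ · ∂_jρ)/ρ) − ∂_j(Δρ) = −2 ρ ∂_j((Δ√ρ)/√ρ), where Δ = ∂₁∂₁ + ∂₂∂₂ and √ρ denotes the pointwise square root. Equivalently, (1/4)∇·((∇ρ ⊗ ∇ρ)/ρ) − (1/4)Δ∇ρ = −(ρ/2)∇((Δ√ρ)/√ρ). -/

import Mathlib

noncomputable section

/-- Partial derivative in the first variable of a function on `ℝ²`. -/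
def pd1 {E : Type*} [NormedAddCommGroup E] [NormedSpace ℝ E] (f : ℝ × ℝ → E) (p : ℝ × ℝ) : E :=
  fderiv ℝ f p (1, 0)

/-- Partial derivative in the second variable of a function on `ℝ²`. -/
def pd2 {E : Type*} [NormedAddCommGroup E] [NormedSpace ℝ E] (f : ℝ × ℝ → E) (p : ℝ × ℝ) : E :=
  fderiv ℝ f p (0, 1)

/-- The Laplacian `Δ = ∂₁∂₁ + ∂₂∂₂` on `ℝ²`. -/
def lap (f : ℝ × ℝ → ℝ) (p : ℝ × ℝ) : ℝ :=
  pd1 (pd1 f) p + pd2 (pd2 f) p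

private lemma fderiv_add_apply' {f g : ℝ × ℝ → ℝ} {p : ℝ × ℝ}
    (hf : DifferentiableAt ℝ f p) (hg : DifferentiableAt ℝ g p) (v : ℝ × ℝ) :
    fderiv ℝ (fun q => f q + g q) p v = fderiv ℝ f p v + fderiv ℝ g p v := by
  rw [fderiv_fun_add hf hg]; simp

private lemma fderiv_sub_apply' {f g : ℝ × ℝ → ℝ} {p : ℝ × ℝ}
    (hf : DifferentiableAt ℝ f p) (hg : DifferentiableAt ℝ g p) (v : ℝ × ℝ) :
    fderiv ℝ (fun q => f q - g q) p v = fderiv ℝ f p v - fderiv ℝ g p v := by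
  rw [fderiv_fun_sub hf hg]; simp

private lemma fderiv_mul_apply' {f g : ℝ × ℝ → ℝ} {p : ℝ × ℝ}
    (hf : DifferentiableAt ℝ f p) (hg : DifferentiableAt ℝ g p) (v : ℝ × ℝ) :
    fderiv ℝ (fun q => f q * g q) p v
      = fderiv ℝ f p v * g p + f p * fderiv ℝ g p v := by
  rw [fderiv_fun_mul hf hg]
  simp [ContinuousLinearMap.add_apply, ContinuousLinearMap.smul_apply, smul_eq_mul]
  ring

private lemma fderiv_const_mul_apply' {f : ℝ × ℝ → ℝ} {p : ℝ × ℝ}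
    (hf : DifferentiableAt ℝ f p) (c : ℝ) (v : ℝ × ℝ) :
    fderiv ℝ (fun q => c * f q) p v = c * fderiv ℝ f p v := by
  rw [fderiv_const_mul hf c]; simp

private lemma fderiv_inv_apply' {g : ℝ × ℝ → ℝ} {p : ℝ × ℝ}
    (hg : DifferentiableAt ℝ g p) (h0 : g p ≠ 0) (v : ℝ × ℝ) :
    fderiv ℝ (fun q => (g q)⁻¹) p v = -(fderiv ℝ g p v) / (g p) ^ 2 := by
  have h : HasFDerivAt (fun q => (g q)⁻¹) ((-((g p) ^ 2)⁻¹) • fderiv ℝ g p) p :=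
    (hasDerivAt_inv h0).comp_hasFDerivAt p hg.hasFDerivAt
  rw [h.fderiv]
  simp [ContinuousLinearMap.smul_apply, smul_eq_mul]
  ring

private lemma fderiv_div_apply' {f g : ℝ × ℝ → ℝ} {p : ℝ × ℝ}
    (hf : DifferentiableAt ℝ f p) (hg : DifferentiableAt ℝ g p) (h0 : g p ≠ 0) (v : ℝ × ℝ) :
    fderiv ℝ (fun q => f q / g q) p v
      = (fderiv ℝ f p v * g p - f p * fderiv ℝ g p v) / (g p) ^ 2 := by
  have hginv : DifferentiableAt ℝ (fun q => (g q)⁻¹) p := hg.inv h0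
  have hrw : (fun q => f q / g q) = fun q => f q * (g q)⁻¹ := by
    funext q; rw [div_eq_mul_inv]
  rw [hrw, fderiv_mul_apply' hf hginv v, fderiv_inv_apply' hg h0 v]
  field_simp
  ring

private lemma fderiv_sqrt_apply' {g : ℝ × ℝ → ℝ} {p : ℝ × ℝ}
    (hg : DifferentiableAt ℝ g p) (h0 : g p ≠ 0) (v : ℝ × ℝ) :
    fderiv ℝ (fun q => Real.sqrt (g q)) p v = fderiv ℝ g p v / (2 * Real.sqrt (g p)) := by
  rw [(hg.hasFDerivAt.sqrt h0).fderiv]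
  simp [ContinuousLinearMap.smul_apply, smul_eq_mul]
  ring

private lemma fderiv_symm' {f : ℝ × ℝ → ℝ} (hf : ContDiff ℝ 3 f) (p v w : ℝ × ℝ) :
    fderiv ℝ (fun q => fderiv ℝ f q w) p v = fderiv ℝ (fun q => fderiv ℝ f q v) p w := by
  have hfd : Differentiable ℝ f := hf.differentiable (by norm_num)
  have hf' : ContDiff ℝ 2 (fderiv ℝ f) := hf.fderiv_right (by norm_num)
  have hf'd : Differentiable ℝ (fderiv ℝ f) := hf'.differentiable (by norm_num)
  have h1 : ∀ y, HasFDerivAt f (fderiv ℝ f y) y := fun y => (hfd y).hasFDerivAt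
  have h2 : HasFDerivAt (fderiv ℝ f) (fderiv ℝ (fderiv ℝ f) p) p := (hf'd p).hasFDerivAt
  have hsymm := second_derivative_symmetric h1 h2 v w
  have e : ∀ u z : ℝ × ℝ, fderiv ℝ (fun q => fderiv ℝ f q u) p z
      = fderiv ℝ (fderiv ℝ f) p z u := by
    intro u z
    rw [fderiv_clm_apply (hf'd p) (differentiableAt_const u)]
    simp
  rw [e w v, e v w]
  exact hsymm

private lemma differentiableAt_div'' {f g : ℝ × ℝ → ℝ} {p : ℝ × ℝ}
    (hf : DifferentiableAt ℝ f p) (hg : DifferentiableAt ℝ g p) (h0 : g p ≠ 0) :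
    DifferentiableAt ℝ (fun q => f q / g q) p := by
  simp only [div_eq_mul_inv]
  exact hf.mul (hg.inv h0)

private lemma key (ρ : ℝ × ℝ → ℝ) (hρ : ContDiff ℝ 3 ρ) (hpos : ∀ p : ℝ × ℝ, 0 < ρ p)
    (v p : ℝ × ℝ) :
    (fderiv ℝ (fun q => fderiv ℝ ρ q (1, 0) * fderiv ℝ ρ q v / ρ q) p (1, 0)
        + fderiv ℝ (fun q => fderiv ℝ ρ q (0, 1) * fderiv ℝ ρ q v / ρ q) p (0, 1))
        - fderiv ℝ (fun q => lap ρ q) p v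
      = -2 * ρ p * fderiv ℝ (fun q => lap (fun r => Real.sqrt (ρ r)) q / Real.sqrt (ρ q)) p v := by
  have hρd : Differentiable ℝ ρ := hρ.differentiable (by norm_num)
  have hne : ∀ q, ρ q ≠ 0 := fun q => (hpos q).ne'
  have hsq : ∀ q, Real.sqrt (ρ q) ≠ 0 := fun q => (Real.sqrt_pos.mpr (hpos q)).ne'
  have hF : ∀ w : ℝ × ℝ, ContDiff ℝ 2 (fun q => fderiv ℝ ρ q w) :=
    fun w => (hρ.fderiv_right (by norm_num)).clm_apply contDiff_const
  have hFd : ∀ w : ℝ × ℝ, Differentiable ℝ (fun q => fderiv ℝ ρ q w) :=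
    fun w => (hF w).differentiable (by norm_num)
  have hG : ∀ w w' : ℝ × ℝ,
      ContDiff ℝ 1 (fun q => fderiv ℝ (fun q' => fderiv ℝ ρ q' w) q w') :=
    fun w w' => ((hF w).fderiv_right (by norm_num)).clm_apply contDiff_const
  have hGd : ∀ w w' : ℝ × ℝ,
      Differentiable ℝ (fun q => fderiv ℝ (fun q' => fderiv ℝ ρ q' w) q w') :=
    fun w w' => (hG w w').differentiable (by norm_num)
  have hsd : Differentiable ℝ (fun r => Real.sqrt (ρ r)) := fun q => (hρd q).sqrt (hne q)
  have hsqrtf : ∀ w : ℝ × ℝ, (fun q => fderiv ℝ (fun r => Real.sqrt (ρ r)) q w)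
      = fun q => fderiv ℝ ρ q w / (2 * Real.sqrt (ρ q)) :=
    fun w => funext fun q => fderiv_sqrt_apply' (hρd q) (hne q) w
  have hden_d : Differentiable ℝ (fun q => 2 * Real.sqrt (ρ q)) := hsd.const_mul 2
  have hden_ne : ∀ q, 2 * Real.sqrt (ρ q) ≠ 0 := fun q => mul_ne_zero two_ne_zero (hsq q)
  have hden : ∀ (w : ℝ × ℝ) (q : ℝ × ℝ), fderiv ℝ (fun q' => 2 * Real.sqrt (ρ q')) q w
      = 2 * (fderiv ℝ ρ q w / (2 * Real.sqrt (ρ q))) := by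
    intro w q
    rw [fderiv_const_mul_apply' ((hρd q).sqrt (hne q)) 2 w,
      fderiv_sqrt_apply' (hρd q) (hne q) w]
  have hlaps : ∀ (w : ℝ × ℝ) (q : ℝ × ℝ),
      fderiv ℝ (fun q' => fderiv ℝ (fun r => Real.sqrt (ρ r)) q' w) q w
        = (fderiv ℝ (fun q' => fderiv ℝ ρ q' w) q w * (2 * Real.sqrt (ρ q))
            - fderiv ℝ ρ q w * (2 * (fderiv ℝ ρ q w / (2 * Real.sqrt (ρ q)))))
              / (2 * Real.sqrt (ρ q)) ^ 2 := by
    intro w q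
    rw [hsqrtf w]
    rw [fderiv_div_apply' (hFd w q) (hden_d q) (hden_ne q) w]
    rw [hden w q]
  have lap_eq : ∀ f : ℝ × ℝ → ℝ, lap f = fun q =>
      fderiv ℝ (fun q' => fderiv ℝ f q' (1, 0)) q (1, 0)
        + fderiv ℝ (fun q' => fderiv ℝ f q' (0, 1)) q (0, 1) := fun f => rfl
  have hB : (fun q => lap (fun r => Real.sqrt (ρ r)) q / Real.sqrt (ρ q))
      = fun q => (fderiv ℝ (fun q' => fderiv ℝ ρ q' (1, 0)) q (1, 0)
            + fderiv ℝ (fun q' => fderiv ℝ ρ q' (0, 1)) q (0, 1)) / (2 * ρ q)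
          - (fderiv ℝ ρ q (1, 0) * fderiv ℝ ρ q (1, 0)
              + fderiv ℝ ρ q (0, 1) * fderiv ℝ ρ q (0, 1)) / (4 * (ρ q * ρ q)) := by
    funext q
    simp only [lap_eq]
    rw [hlaps (1, 0) q, hlaps (0, 1) q]
    have hsq2 : Real.sqrt (ρ q) ^ 2 = ρ q := Real.sq_sqrt (hpos q).le
    rw [← hsq2]
    field_simp [hsq q]
    rw [Real.sqrt_sq (Real.sqrt_nonneg _)]
    ring
  rw [hB]
  simp only [lap_eq]
  -- expand the left-hand side derivatives
  have e1 : fderiv ℝ (fun q => fderiv ℝ ρ q (1, 0) * fderiv ℝ ρ q v / ρ q) p (1, 0)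
      = ((fderiv ℝ (fun q' => fderiv ℝ ρ q' (1, 0)) p (1, 0) * fderiv ℝ ρ p v
            + fderiv ℝ ρ p (1, 0) * fderiv ℝ (fun q' => fderiv ℝ ρ q' v) p (1, 0)) * ρ p
          - fderiv ℝ ρ p (1, 0) * fderiv ℝ ρ p v * fderiv ℝ ρ p (1, 0)) / ρ p ^ 2 := by
    rw [fderiv_div_apply' ((hFd (1, 0) p).fun_mul (hFd v p)) (hρd p) (hne p) (1, 0),
      fderiv_mul_apply' (hFd (1, 0) p) (hFd v p) (1, 0)]
  have e2 : fderiv ℝ (fun q => fderiv ℝ ρ q (0, 1) * fderiv ℝ ρ q v / ρ q) p (0, 1)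
      = ((fderiv ℝ (fun q' => fderiv ℝ ρ q' (0, 1)) p (0, 1) * fderiv ℝ ρ p v
            + fderiv ℝ ρ p (0, 1) * fderiv ℝ (fun q' => fderiv ℝ ρ q' v) p (0, 1)) * ρ p
          - fderiv ℝ ρ p (0, 1) * fderiv ℝ ρ p v * fderiv ℝ ρ p (0, 1)) / ρ p ^ 2 := by
    rw [fderiv_div_apply' ((hFd (0, 1) p).fun_mul (hFd v p)) (hρd p) (hne p) (0, 1),
      fderiv_mul_apply' (hFd (0, 1) p) (hFd v p) (0, 1)]
  have e3 : fderiv ℝ (fun q =>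
        fderiv ℝ (fun q' => fderiv ℝ ρ q' (1, 0)) q (1, 0)
          + fderiv ℝ (fun q' => fderiv ℝ ρ q' (0, 1)) q (0, 1)) p v
      = fderiv ℝ (fun q => fderiv ℝ (fun q' => fderiv ℝ ρ q' (1, 0)) q (1, 0)) p v
        + fderiv ℝ (fun q => fderiv ℝ (fun q' => fderiv ℝ ρ q' (0, 1)) q (0, 1)) p v :=
    fderiv_add_apply' (hGd (1, 0) (1, 0) p) (hGd (0, 1) (0, 1) p) v
  -- differentiability of the pieces of the right-hand side
  have dnum : DifferentiableAt ℝ (fun q =>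
      fderiv ℝ (fun q' => fderiv ℝ ρ q' (1, 0)) q (1, 0)
        + fderiv ℝ (fun q' => fderiv ℝ ρ q' (0, 1)) q (0, 1)) p :=
    (hGd (1, 0) (1, 0) p).add (hGd (0, 1) (0, 1) p)
  have dden1 : DifferentiableAt ℝ (fun q => 2 * ρ q) p := (hρd p).const_mul 2
  have dden1ne : (2 : ℝ) * ρ p ≠ 0 := mul_ne_zero two_ne_zero (hne p)
  have dnum2 : DifferentiableAt ℝ (fun q =>
      fderiv ℝ ρ q (1, 0) * fderiv ℝ ρ q (1, 0)
        + fderiv ℝ ρ q (0, 1) * fderiv ℝ ρ q (0, 1)) p :=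
    ((hFd (1, 0) p).mul (hFd (1, 0) p)).add ((hFd (0, 1) p).mul (hFd (0, 1) p))
  have dden2 : DifferentiableAt ℝ (fun q => 4 * (ρ q * ρ q)) p :=
    ((hρd p).mul (hρd p)).const_mul 4
  have dden2ne : (4 : ℝ) * (ρ p * ρ p) ≠ 0 :=
    mul_ne_zero four_ne_zero (mul_ne_zero (hne p) (hne p))
  have e4 : fderiv ℝ (fun q =>
        (fderiv ℝ (fun q' => fderiv ℝ ρ q' (1, 0)) q (1, 0)
            + fderiv ℝ (fun q' => fderiv ℝ ρ q' (0, 1)) q (0, 1)) / (2 * ρ q)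
          - (fderiv ℝ ρ q (1, 0) * fderiv ℝ ρ q (1, 0)
              + fderiv ℝ ρ q (0, 1) * fderiv ℝ ρ q (0, 1)) / (4 * (ρ q * ρ q))) p v
      = ((fderiv ℝ (fun q => fderiv ℝ (fun q' => fderiv ℝ ρ q' (1, 0)) q (1, 0)) p v
            + fderiv ℝ (fun q => fderiv ℝ (fun q' => fderiv ℝ ρ q' (0, 1)) q (0, 1)) p v)
              * (2 * ρ p)
          - (fderiv ℝ (fun q' => fderiv ℝ ρ q' (1, 0)) p (1, 0)
              + fderiv ℝ (fun q' => fderiv ℝ ρ q' (0, 1)) p (0, 1))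
              * (2 * fderiv ℝ ρ p v)) / (2 * ρ p) ^ 2
        - ((fderiv ℝ (fun q' => fderiv ℝ ρ q' (1, 0)) p v * fderiv ℝ ρ p (1, 0)
              + fderiv ℝ ρ p (1, 0) * fderiv ℝ (fun q' => fderiv ℝ ρ q' (1, 0)) p v
              + (fderiv ℝ (fun q' => fderiv ℝ ρ q' (0, 1)) p v * fderiv ℝ ρ p (0, 1)
                  + fderiv ℝ ρ p (0, 1) * fderiv ℝ (fun q' => fderiv ℝ ρ q' (0, 1)) p v))
                * (4 * (ρ p * ρ p))
            - (fderiv ℝ ρ p (1, 0) * fderiv ℝ ρ p (1, 0)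
                + fderiv ℝ ρ p (0, 1) * fderiv ℝ ρ p (0, 1))
                * (4 * (fderiv ℝ ρ p v * ρ p + ρ p * fderiv ℝ ρ p v)))
              / (4 * (ρ p * ρ p)) ^ 2 := by
    rw [fderiv_sub_apply' (differentiableAt_div'' dnum dden1 dden1ne) (differentiableAt_div'' dnum2 dden2 dden2ne) v,
      fderiv_div_apply' dnum dden1 dden1ne v,
      fderiv_div_apply' dnum2 dden2 dden2ne v,
      fderiv_add_apply' (hGd (1, 0) (1, 0) p) (hGd (0, 1) (0, 1) p) v,
      fderiv_const_mul_apply' (hρd p) 2 v,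
      fderiv_add_apply' ((hFd (1, 0) p).fun_mul (hFd (1, 0) p))
        ((hFd (0, 1) p).fun_mul (hFd (0, 1) p)) v,
      fderiv_mul_apply' (hFd (1, 0) p) (hFd (1, 0) p) v,
      fderiv_mul_apply' (hFd (0, 1) p) (hFd (0, 1) p) v,
      fderiv_const_mul_apply' ((hρd p).fun_mul (hρd p)) 4 v,
      fderiv_mul_apply' (hρd p) (hρd p) v]
  rw [e1, e2, e3, e4, fderiv_symm' hρ p (1, 0) v, fderiv_symm' hρ p (0, 1) v]
  field_simp [hne p]
  ring

/-- Bohm quantum-pressure identity: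
`Σ_k ∂_k((∂_kρ ∂_jρ)/ρ) − ∂_j(Δρ) = −2 ρ ∂_j((Δ√ρ)/√ρ)` for `j = 1, 2`. -/
theorem bohm_pressure_identity (ρ : ℝ × ℝ → ℝ)
    (hρ : ContDiff ℝ 3 ρ) (hpos : ∀ p : ℝ × ℝ, 0 < ρ p) :
    ∀ p : ℝ × ℝ,
      ((pd1 (fun q => pd1 ρ q * pd1 ρ q / ρ q) p + pd2 (fun q => pd2 ρ q * pd1 ρ q / ρ q) p)
          - pd1 (fun q => lap ρ q) p
        = -2 * ρ p * pd1 (fun q => lap (fun r => Real.sqrt (ρ r)) q / Real.sqrt (ρ q)) p)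
      ∧
      ((pd1 (fun q => pd1 ρ q * pd2 ρ q / ρ q) p + pd2 (fun q => pd2 ρ q * pd2 ρ q / ρ q) p)
          - pd2 (fun q => lap ρ q) p
        = -2 * ρ p * pd2 (fun q => lap (fun r => Real.sqrt (ρ r)) q / Real.sqrt (ρ q)) p) := by
  intro p
  constructor
  · exact key ρ hρ hpos (1, 0) p
  · exact key ρ hρ hpos (0, 1) p

end
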